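/- arXiv:2502.02898 — 2 statements merged into one kernel-verified Lean document; each statement's English description precedes it below -/
import Mathlib

section
/- The function f_3 defined on the unit disk by f_3(z) = ∫₀^z (1 + tanh(t³))^{1/2} dt belongs to the class BT_B and satisfies |a_2·a_3 − a_4| = 1/8 (its Taylor coefficients satisfy a_2 = a_3 = 0 and a_4 = 1/8). Hence the Zalcman bound |a_2·a_3 − a_4| ≤ 1/8 for the class BT_B is sharp. -/
open Complex Metric

/-- Principal branch of the square root: `w^(1/2) = exp((1/2) * Log w)`. -/
noncomputable def psqrt (w : ℂ) : ℂ := Complex.exp ((1/2 : ℂ) * Complex.log w)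

/-- The `n`-th Taylor coefficient of `f` at `0`, i.e. `f^(n)(0)/n!`. -/
noncomputable def tCoeff (f : ℂ → ℂ) (n : ℕ) : ℂ := iteratedDeriv n f 0 / n.factorial

/-- The class `BT_B` of bounded turning functions associated with the bean-shaped domain:
`f` is analytic on the unit disk, `f 0 = 0`, `f' 0 = 1`, `f` injective on the disk,
and `f'(z) = (1 + tanh (ω z))^(1/2)` for a Schwarz function `ω`. -/
def IsBTB (f : ℂ → ℂ) : Prop :=
  AnalyticOnNhd ℂ f (ball 0 1) ∧ f 0 = 0 ∧ deriv f 0 = 1 ∧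
  Set.InjOn f (ball 0 1) ∧
  ∃ ω : ℂ → ℂ, AnalyticOnNhd ℂ ω (ball 0 1) ∧ ω 0 = 0 ∧
    (∀ z ∈ ball (0:ℂ) 1, ‖ω z‖ < 1) ∧
    (∀ z ∈ ball (0:ℂ) 1, deriv f z = psqrt (1 + Complex.tanh (ω z)))

noncomputable def f₃ (z : ℂ) : ℂ :=
  ∫ t in (0:ℝ)..1, z * psqrt (1 + Complex.tanh (((t : ℂ) * z)^3))

/-! ### Auxiliary lemmas -/

lemma cosh_decomp (x y : ℝ) :
    Complex.cosh (x + y*I) = Real.cosh x * Real.cos y + (Real.sinh x * Real.sin y) * I := by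
  rw [Complex.cosh_add, Complex.cosh_mul_I, Complex.sinh_mul_I]
  push_cast [Complex.ofReal_cosh, Complex.ofReal_sinh, Complex.ofReal_cos, Complex.ofReal_sin]
  ring

lemma sinh_decomp (x y : ℝ) :
    Complex.sinh (x + y*I) = Real.sinh x * Real.cos y + (Real.cosh x * Real.sin y) * I := by
  rw [Complex.sinh_add, Complex.cosh_mul_I, Complex.sinh_mul_I]
  push_cast [Complex.ofReal_cosh, Complex.ofReal_sinh, Complex.ofReal_cos, Complex.ofReal_sin]
  ring

lemma cosh_re' (w : ℂ) : (Complex.cosh w).re = Real.cosh w.re * Real.cos w.im := by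
  conv_lhs => rw [show w = (w.re : ℂ) + w.im * I from (Complex.re_add_im w).symm, cosh_decomp]
  simp only [Complex.add_re, Complex.add_im, Complex.mul_re, Complex.mul_im,
    Complex.ofReal_re, Complex.ofReal_im, Complex.I_re, Complex.I_im]
  ring

lemma cosh_im' (w : ℂ) : (Complex.cosh w).im = Real.sinh w.re * Real.sin w.im := by
  conv_lhs => rw [show w = (w.re : ℂ) + w.im * I from (Complex.re_add_im w).symm, cosh_decomp]
  simp only [Complex.add_re, Complex.add_im, Complex.mul_re, Complex.mul_im,
    Complex.ofReal_re, Complex.ofReal_im, Complex.I_re, Complex.I_im]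
  ring

lemma sinh_re' (w : ℂ) : (Complex.sinh w).re = Real.sinh w.re * Real.cos w.im := by
  conv_lhs => rw [show w = (w.re : ℂ) + w.im * I from (Complex.re_add_im w).symm, sinh_decomp]
  simp only [Complex.add_re, Complex.add_im, Complex.mul_re, Complex.mul_im,
    Complex.ofReal_re, Complex.ofReal_im, Complex.I_re, Complex.I_im]
  ring

lemma sinh_im' (w : ℂ) : (Complex.sinh w).im = Real.cosh w.re * Real.sin w.im := by
  conv_lhs => rw [show w = (w.re : ℂ) + w.im * I from (Complex.re_add_im w).symm, sinh_decomp]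
  simp only [Complex.add_re, Complex.add_im, Complex.mul_re, Complex.mul_im,
    Complex.ofReal_re, Complex.ofReal_im, Complex.I_re, Complex.I_im]
  ring

lemma my_cos_pos {w : ℂ} (hw : ‖w‖ < 1) : 0 < Real.cos w.im := by
  have hy : |w.im| < 1 := lt_of_le_of_lt (Complex.abs_im_le_norm w) hw
  apply Real.cos_pos_of_mem_Ioo
  constructor <;> nlinarith [abs_lt.1 hy, Real.pi_gt_three]

lemma my_cosh_ne_zero {w : ℂ} (hw : ‖w‖ < 1) : Complex.cosh w ≠ 0 := by
  intro h
  have := congrArg Complex.re h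
  rw [cosh_re'] at this
  simp at this
  rcases this with h1 | h1
  · linarith [Real.cosh_pos (x := w.re)]
  · linarith [my_cos_pos hw]

lemma one_add_tanh_mem_slitPlane {w : ℂ} (hw : ‖w‖ < 1) :
    1 + Complex.tanh w ∈ Complex.slitPlane := by
  have hy : |w.im| < 1 := lt_of_le_of_lt (Complex.abs_im_le_norm w) hw
  have hcos : 0 < Real.cos w.im := my_cos_pos hw
  have hch : 0 < Real.cosh w.re := Real.cosh_pos w.re
  have hne := my_cosh_ne_zero hw
  rw [Complex.mem_slitPlane_iff]
  by_cases hy0 : w.im = 0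
  · left
    have hwr : w = (w.re : ℂ) := by
      rw [show w = (w.re : ℂ) + w.im * I from (Complex.re_add_im w).symm, hy0]; simp
    rw [hwr, ← Complex.ofReal_tanh, ← Complex.ofReal_one, ← Complex.ofReal_add,
      Complex.ofReal_re]
    have : 1 + Real.tanh w.re = Real.exp w.re / Real.cosh w.re := by
      rw [Real.tanh_eq_sinh_div_cosh, ← Real.cosh_add_sinh]
      field_simp
    rw [this]
    positivity
  · right
    have hsin : Real.sin w.im ≠ 0 := by
      rcases lt_or_gt_of_ne hy0 with h | h
      · have : 0 < Real.sin (-w.im) := Real.sin_pos_of_pos_of_lt_pi (by linarith)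
          (by nlinarith [Real.pi_gt_three, abs_lt.1 hy])
        rw [Real.sin_neg] at this; linarith
      · have := Real.sin_pos_of_pos_of_lt_pi h
          (by nlinarith [Real.pi_gt_three, abs_lt.1 hy])
        linarith
    have hN : 0 < Complex.normSq (Complex.cosh w) := Complex.normSq_pos.2 hne
    rw [Complex.tanh_eq_sinh_div_cosh, Complex.add_im, Complex.one_im, zero_add,
      Complex.div_im, sinh_im', sinh_re', cosh_re', cosh_im', div_sub_div_same]
    have hkey : Real.cosh w.re * Real.sin w.im * (Real.cosh w.re * Real.cos w.im)
        - Real.sinh w.re * Real.cos w.im * (Real.sinh w.re * Real.sin w.im)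
        = Real.sin w.im * Real.cos w.im := by
      linear_combination (Real.sin w.im * Real.cos w.im) * (Real.cosh_sq_sub_sinh_sq w.re)
    rw [hkey]
    exact div_ne_zero (mul_ne_zero hsin (ne_of_gt hcos)) (ne_of_gt hN)

lemma psqrt_one : psqrt 1 = 1 := by simp [psqrt]

lemma psqrt_re_pos {w : ℂ} (hw : w ∈ Complex.slitPlane) : 0 < (psqrt w).re := by
  rw [psqrt, Complex.exp_re]
  have him : ((1/2 : ℂ) * Complex.log w).im = w.arg / 2 := by
    rw [Complex.mul_im]
    simp [Complex.log_im]
    ring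
  rw [him]
  have h1 : -Real.pi < w.arg := Complex.neg_pi_lt_arg w
  have h2 : w.arg ≤ Real.pi := Complex.arg_le_pi w
  have h3 : w.arg ≠ Real.pi := Complex.slitPlane_arg_ne_pi hw
  have h4 : w.arg < Real.pi := lt_of_le_of_ne h2 h3
  have : 0 < Real.cos (w.arg / 2) :=
    Real.cos_pos_of_mem_Ioo ⟨by linarith, by linarith⟩
  positivity

lemma hasDerivAt_psqrt {w : ℂ} (hw : w ∈ Complex.slitPlane) :
    HasDerivAt psqrt (psqrt w * (2*w)⁻¹) w := by
  have h := ((Complex.hasDerivAt_log hw).const_mul ((1:ℂ)/2)).cexp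
  refine h.congr_deriv ?_
  rw [psqrt, mul_inv]
  ring

lemma analyticAt_psqrt {w : ℂ} (hw : w ∈ Complex.slitPlane) : AnalyticAt ℂ psqrt w :=
  (Complex.differentiable_exp.analyticAt _).comp
    (analyticAt_const.mul (analyticAt_clog hw))

lemma analyticAt_ctanh {w : ℂ} (hw : Complex.cosh w ≠ 0) : AnalyticAt ℂ Complex.tanh w := by
  have he : Complex.tanh = fun z => Complex.sinh z / Complex.cosh z :=
    funext Complex.tanh_eq_sinh_div_cosh
  rw [he]
  exact (Complex.differentiable_sinh.analyticAt w).div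
    (Complex.differentiable_cosh.analyticAt w) hw

lemma hasDerivAt_ctanh {w : ℂ} (hw : Complex.cosh w ≠ 0) :
    HasDerivAt Complex.tanh ((Complex.cosh w ^ 2)⁻¹) w := by
  have he : Complex.tanh = fun z => Complex.sinh z / Complex.cosh z :=
    funext Complex.tanh_eq_sinh_div_cosh
  have h := (Complex.hasDerivAt_sinh w).div (Complex.hasDerivAt_cosh w) hw
  rw [show Complex.sinh / Complex.cosh = Complex.tanh from by rw [he]; rfl] at h
  refine h.congr_deriv ?_
  rw [show (Complex.cosh w * Complex.cosh w - Complex.sinh w * Complex.sinh w) = 1 from by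
    linear_combination Complex.cosh_sq_sub_sinh_sq w, inv_eq_one_div]

/-! ### The functions `gg`, `AA`, `DD` -/

noncomputable def gg (z : ℂ) : ℂ := psqrt (1 + Complex.tanh (z^3))
noncomputable def AA (z : ℂ) : ℂ :=
  3 * psqrt (1 + Complex.tanh (z^3)) / (2 * (1 + Complex.tanh (z^3)) * Complex.cosh (z^3) ^ 2)
noncomputable def DD (z : ℂ) : ℂ := z^2 * AA z

lemma cube_abs_lt {z : ℂ} (hz : z ∈ ball (0:ℂ) 1) : ‖z^3‖ < 1 := by
  rw [mem_ball_zero_iff] at hz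
  rw [norm_pow]
  exact pow_lt_one₀ (norm_nonneg z) hz (by norm_num)

lemma slit3 {z : ℂ} (hz : z ∈ ball (0:ℂ) 1) : 1 + Complex.tanh (z^3) ∈ Complex.slitPlane :=
  one_add_tanh_mem_slitPlane (cube_abs_lt hz)

lemma ne3 {z : ℂ} (hz : z ∈ ball (0:ℂ) 1) : 1 + Complex.tanh (z^3) ≠ 0 :=
  (Complex.mem_slitPlane_iff_arg.1 (slit3 hz)).2

lemma coshne3 {z : ℂ} (hz : z ∈ ball (0:ℂ) 1) : Complex.cosh (z^3) ≠ 0 :=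
  my_cosh_ne_zero (cube_abs_lt hz)

lemma analyticAt_cube {z : ℂ} : AnalyticAt ℂ (fun z : ℂ => z^3) z := by
  have h : AnalyticAt ℂ (id : ℂ → ℂ) z := analyticAt_id
  exact h.pow 3

lemma analyticAt_inner {z : ℂ} (hz : z ∈ ball (0:ℂ) 1) :
    AnalyticAt ℂ (fun z : ℂ => 1 + Complex.tanh (z^3)) z := by
  have h1 : AnalyticAt ℂ (fun z : ℂ => Complex.tanh (z^3)) z :=
    AnalyticAt.comp (g := Complex.tanh) (f := fun z : ℂ => z^3)
      (analyticAt_ctanh (coshne3 hz)) analyticAt_cube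
  exact analyticAt_const.add h1

lemma analyticAt_gg {z : ℂ} (hz : z ∈ ball (0:ℂ) 1) : AnalyticAt ℂ gg z := by
  have h : AnalyticAt ℂ (fun z : ℂ => psqrt (1 + Complex.tanh (z^3))) z :=
    AnalyticAt.comp (g := psqrt) (f := fun z : ℂ => 1 + Complex.tanh (z^3))
      (analyticAt_psqrt (slit3 hz)) (analyticAt_inner hz)
  exact h

lemma analyticAt_coshcube {z : ℂ} : AnalyticAt ℂ (fun z : ℂ => Complex.cosh (z^3)) z :=
  AnalyticAt.comp (g := Complex.cosh) (f := fun z : ℂ => z^3)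
    (Complex.differentiable_cosh.analyticAt _) analyticAt_cube

lemma analyticAt_AA {z : ℂ} (hz : z ∈ ball (0:ℂ) 1) : AnalyticAt ℂ AA z := by
  have hden : (2 * (1 + Complex.tanh (z^3)) * Complex.cosh (z^3) ^ 2) ≠ 0 :=
    mul_ne_zero (mul_ne_zero two_ne_zero (ne3 hz)) (pow_ne_zero 2 (coshne3 hz))
  exact (analyticAt_const.mul (analyticAt_gg hz)).div
    ((analyticAt_const.mul (analyticAt_inner hz)).mul (analyticAt_coshcube.pow 2)) hden

lemma analyticAt_DD {z : ℂ} (hz : z ∈ ball (0:ℂ) 1) : AnalyticAt ℂ DD z := by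
  have h : AnalyticAt ℂ (id : ℂ → ℂ) z := analyticAt_id
  exact (h.pow 2).mul (analyticAt_AA hz)

lemma gg_hasDerivAt {z : ℂ} (hz : z ∈ ball (0:ℂ) 1) : HasDerivAt gg (DD z) z := by
  have h3 : HasDerivAt (fun z : ℂ => z^3) (3 * z^2) z := by
    simpa using hasDerivAt_pow 3 z
  have ht : HasDerivAt (fun z : ℂ => 1 + Complex.tanh (z^3))
      ((Complex.cosh (z^3) ^ 2)⁻¹ * (3 * z^2)) z :=
    ((hasDerivAt_ctanh (coshne3 hz)).comp (h₂ := Complex.tanh) z h3).const_add 1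
  have hp := (hasDerivAt_psqrt (slit3 hz)).comp z ht
  refine hp.congr_deriv ?_
  unfold DD AA
  have hT := ne3 hz
  have hc := coshne3 hz
  field_simp

lemma gg_zero : gg 0 = 1 := by
  simp [gg, psqrt_one]

lemma AA_zero : AA 0 = 3/2 := by
  norm_num [AA, psqrt_one]

lemma gg_re_pos {z : ℂ} (hz : z ∈ ball (0:ℂ) 1) : 0 < (gg z).re :=
  psqrt_re_pos (slit3 hz)

lemma gg_contOn : ContinuousOn gg (ball (0:ℂ) 1) :=
  fun z hz => (analyticAt_gg hz).continuousAt.continuousWithinAt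

lemma DD_contOn : ContinuousOn DD (ball (0:ℂ) 1) :=
  fun z hz => (analyticAt_DD hz).continuousAt.continuousWithinAt

lemma mul_mem_unit_ball {t : ℝ} (ht0 : 0 ≤ t) (ht1 : t ≤ 1) {x : ℂ} (hx : x ∈ ball (0:ℂ) 1) :
    (t:ℂ) * x ∈ ball (0:ℂ) 1 := by
  rw [mem_ball_zero_iff] at *
  rw [norm_mul, Complex.norm_real, Real.norm_eq_abs, _root_.abs_of_nonneg ht0]
  nlinarith [norm_nonneg x]

lemma contOn_param {x : ℂ} (hx : x ∈ ball (0:ℂ) 1) {G : ℂ → ℂ}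
    (hG : ContinuousOn G (ball (0:ℂ) 1)) :
    ContinuousOn (fun t : ℝ => G ((t:ℂ)*x)) (Set.Icc 0 1) := by
  apply hG.comp ((Complex.continuous_ofReal.mul continuous_const).continuousOn)
  intro t ht
  exact mul_mem_unit_ball ht.1 ht.2 hx

lemma f3_hasDerivAt {z₀ : ℂ} (hz : z₀ ∈ ball (0:ℂ) 1) : HasDerivAt f₃ (gg z₀) z₀ := by
  have hz' : ‖z₀‖ < 1 := mem_ball_zero_iff.1 hz
  set ε : ℝ := (1 - ‖z₀‖)/2 with hε
  have hε0 : 0 < ε := by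
    have := norm_nonneg z₀; simp only [hε]; linarith
  set r : ℝ := (1 + ‖z₀‖)/2 with hr
  have hr1 : r < 1 := by simp only [hr]; linarith
  have hr0 : 0 ≤ r := by positivity
  have hxball : ∀ x ∈ ball z₀ ε, ‖x‖ < r := by
    intro x hx
    have : ‖x - z₀‖ < ε := by rwa [mem_ball, dist_eq_norm] at hx
    calc ‖x‖ = ‖z₀ + (x - z₀)‖ := by ring_nf
    _ ≤ ‖z₀‖ + ‖x - z₀‖ := norm_add_le _ _
    _ < ‖z₀‖ + ε := by linarith
    _ = r := by simp only [hε, hr]; ring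
  have hsub : closedBall (0:ℂ) r ⊆ ball (0:ℂ) 1 := closedBall_subset_ball hr1
  obtain ⟨M₁, hM₁⟩ := (isCompact_closedBall (0:ℂ) r).exists_bound_of_continuousOn
    (gg_contOn.mono hsub)
  obtain ⟨M₂, hM₂⟩ := (isCompact_closedBall (0:ℂ) r).exists_bound_of_continuousOn
    (DD_contOn.mono hsub)
  have hM₁0 : 0 ≤ M₁ := le_trans (norm_nonneg _) (hM₁ 0 (mem_closedBall_self hr0))
  have hM₂0 : 0 ≤ M₂ := le_trans (norm_nonneg _) (hM₂ 0 (mem_closedBall_self hr0))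
  set F' : ℂ → ℝ → ℂ := fun x t => 1 * gg ((t:ℂ)*x) + x * (DD ((t:ℂ)*x) * (t:ℂ)) with hF'def
  have hIoc : Set.uIoc (0:ℝ) 1 = Set.Ioc 0 1 := Set.uIoc_of_le zero_le_one
  have hIocIcc : Set.uIoc (0:ℝ) 1 ⊆ Set.Icc 0 1 := by
    rw [hIoc]; exact Set.Ioc_subset_Icc_self
  have hcontF' : ∀ x ∈ ball (0:ℂ) 1, ContinuousOn (fun t : ℝ => F' x t) (Set.Icc 0 1) := by
    intro x hx
    apply ContinuousOn.add
    · exact continuousOn_const.mul (contOn_param hx gg_contOn)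
    · exact continuousOn_const.mul ((contOn_param hx DD_contOn).mul
        Complex.continuous_ofReal.continuousOn)
  have key := intervalIntegral.hasDerivAt_integral_of_dominated_loc_of_deriv_le
    (𝕜 := ℂ) (μ := MeasureTheory.volume) (a := 0) (b := 1)
    (F := fun x t => x * gg ((t:ℂ)*x)) (F' := F') (x₀ := z₀)
    (bound := fun _ => M₁ + M₂) (ball_mem_nhds z₀ hε0) ?_ ?_ ?_ ?_ ?_ ?_
  · have h2 := key.2
    have hfeq : f₃ = fun z => ∫ t in (0:ℝ)..1, z * gg ((t:ℂ)*z) := rfl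
    rw [← hfeq] at h2
    have hint : (∫ t in (0:ℝ)..1, F' z₀ t) = gg z₀ := by
      have hφ : ∀ t ∈ Set.uIcc (0:ℝ) 1,
          HasDerivAt (fun s : ℝ => (s:ℂ) * gg ((s:ℂ)*z₀)) (F' z₀ t) t := by
        intro t ht
        rw [Set.uIcc_of_le zero_le_one] at ht
        have hmem : (t:ℂ)*z₀ ∈ ball (0:ℂ) 1 := mul_mem_unit_ball ht.1 ht.2 hz
        have hlin : HasDerivAt (fun s : ℂ => s * z₀) z₀ (t:ℂ) := by
          simpa using (hasDerivAt_id ((t:ℂ))).mul_const z₀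
        have hinner : HasDerivAt (fun s : ℂ => gg (s*z₀)) (DD ((t:ℂ)*z₀) * z₀) (t:ℂ) :=
          (gg_hasDerivAt hmem).comp (h₂ := gg) (t:ℂ) hlin
        have h2' : HasDerivAt (fun s : ℂ => s * gg (s*z₀))
            (1 * gg ((t:ℂ)*z₀) + (t:ℂ) * (DD ((t:ℂ)*z₀) * z₀)) (t:ℂ) :=
          (hasDerivAt_id _).mul hinner
        have h3 := h2'.comp_ofReal
        convert h3 using 1
        simp only [hF'def]
        ring
      have hF'int : IntervalIntegrable (F' z₀) MeasureTheory.volume 0 1 := by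
        apply ContinuousOn.intervalIntegrable
        rw [Set.uIcc_of_le zero_le_one]
        exact hcontF' z₀ hz
      rw [intervalIntegral.integral_eq_sub_of_hasDerivAt hφ hF'int]
      norm_num
    rwa [hint] at h2
  · -- hF_meas
    filter_upwards [ball_mem_nhds z₀ hε0] with x hx
    have hx1 : x ∈ ball (0:ℂ) 1 := mem_ball_zero_iff.2 ((hxball x hx).trans hr1)
    exact ((continuousOn_const.mul (contOn_param hx1 gg_contOn)).mono hIocIcc
      ).aestronglyMeasurable measurableSet_uIoc
  · -- hF_int
    apply ContinuousOn.intervalIntegrable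
    rw [Set.uIcc_of_le zero_le_one]
    exact continuousOn_const.mul (contOn_param hz gg_contOn)
  · -- hF'_meas
    exact ((hcontF' z₀ hz).mono hIocIcc).aestronglyMeasurable measurableSet_uIoc
  · -- h_bound
    apply Filter.Eventually.of_forall
    intro t ht x hx
    rw [hIoc] at ht
    have htx : (t:ℂ)*x ∈ closedBall (0:ℂ) r := by
      rw [mem_closedBall_zero_iff, norm_mul, Complex.norm_real, Real.norm_eq_abs,
        _root_.abs_of_nonneg (le_of_lt ht.1)]
      nlinarith [hxball x hx, norm_nonneg x, ht.1, ht.2]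
    have h1 : ‖gg ((t:ℂ)*x)‖ ≤ M₁ := hM₁ _ htx
    have h2 : ‖DD ((t:ℂ)*x)‖ ≤ M₂ := hM₂ _ htx
    have hxr : ‖x‖ < r := hxball x hx
    calc ‖F' x t‖ ≤ ‖1 * gg ((t:ℂ)*x)‖ + ‖x * (DD ((t:ℂ)*x) * (t:ℂ))‖ := norm_add_le _ _
    _ = ‖gg ((t:ℂ)*x)‖ + ‖x‖ * (‖DD ((t:ℂ)*x)‖ * |t|) := by
        rw [one_mul, norm_mul, norm_mul, Complex.norm_real, Real.norm_eq_abs]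
    _ ≤ M₁ + M₂ := by
        have ht1 : |t| ≤ 1 := by rw [_root_.abs_of_nonneg (le_of_lt ht.1)]; exact ht.2
        have hx1 : ‖x‖ ≤ 1 := le_of_lt (hxr.trans hr1)
        have hd : ‖DD ((t:ℂ)*x)‖ * |t| ≤ M₂ := by
          nlinarith [abs_nonneg t, norm_nonneg (DD ((t:ℂ)*x))]
        have hxd : ‖x‖ * (‖DD ((t:ℂ)*x)‖ * |t|) ≤ M₂ := by
          nlinarith [norm_nonneg x, mul_nonneg (norm_nonneg (DD ((t:ℂ)*x))) (abs_nonneg t)]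
        linarith
  · -- bound integrable
    exact intervalIntegrable_const
  · -- h_diff
    apply Filter.Eventually.of_forall
    intro t ht x hx
    rw [hIoc] at ht
    have hx1 : x ∈ ball (0:ℂ) 1 := mem_ball_zero_iff.2 ((hxball x hx).trans hr1)
    have hmem : (t:ℂ)*x ∈ ball (0:ℂ) 1 := mul_mem_unit_ball (le_of_lt ht.1) ht.2 hx1
    have hlin : HasDerivAt (fun y : ℂ => (t:ℂ) * y) (t:ℂ) x := by
      simpa using (hasDerivAt_id x).const_mul (t:ℂ)
    have hinner : HasDerivAt (fun y : ℂ => gg ((t:ℂ)*y)) (DD ((t:ℂ)*x) * (t:ℂ)) x :=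
      (gg_hasDerivAt hmem).comp (h₂ := gg) x hlin
    exact (hasDerivAt_id x).mul hinner

lemma f3_zero : f₃ 0 = 0 := by simp [f₃]

lemma f3_deriv {z : ℂ} (hz : z ∈ ball (0:ℂ) 1) : deriv f₃ z = gg z := (f3_hasDerivAt hz).deriv

lemma h0mem : (0:ℂ) ∈ ball (0:ℂ) 1 := mem_ball_self one_pos

lemma f3_injOn : Set.InjOn f₃ (ball (0:ℂ) 1) := by
  intro a ha b hb hab
  by_contra hne
  have hba : b - a ≠ 0 := sub_ne_zero.2 (Ne.symm hne)
  have hseg : ∀ t : ℝ, t ∈ Set.Icc (0:ℝ) 1 → a + (t:ℂ)*(b-a) ∈ ball (0:ℂ) 1 := by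
    intro t ht
    have he : a + (t:ℂ)*(b-a) = (1-t) • a + t • b := by
      simp only [Complex.real_smul]
      push_cast
      ring
    rw [he]
    exact (convex_ball (0:ℂ) 1) ha hb (by linarith [ht.2]) ht.1 (by ring)
  have hFTC : ∀ t ∈ Set.uIcc (0:ℝ) 1,
      HasDerivAt (fun s : ℝ => f₃ (a + (s:ℂ)*(b-a))) ((b-a) * gg (a + (t:ℂ)*(b-a))) t := by
    intro t ht
    rw [Set.uIcc_of_le zero_le_one] at ht
    have hmem := hseg t ht
    have hlin : HasDerivAt (fun s : ℂ => a + s*(b-a)) (b-a) (t:ℂ) := by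
      simpa using ((hasDerivAt_id ((t:ℂ))).mul_const (b-a)).const_add a
    have h := ((f3_hasDerivAt hmem).comp (t:ℂ) hlin).comp_ofReal
    convert h using 1
    · rfl
    ring
  have hcontseg : ContinuousOn (fun t : ℝ => gg (a + (t:ℂ)*(b-a))) (Set.Icc 0 1) := by
    apply gg_contOn.comp
      ((continuous_const.add (Complex.continuous_ofReal.mul continuous_const)).continuousOn)
    intro t ht
    exact hseg t ht
  have hintg : IntervalIntegrable (fun t : ℝ => (b-a) * gg (a + (t:ℂ)*(b-a)))
      MeasureTheory.volume 0 1 := by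
    apply ContinuousOn.intervalIntegrable
    rw [Set.uIcc_of_le zero_le_one]
    exact continuousOn_const.mul hcontseg
  have heq := intervalIntegral.integral_eq_sub_of_hasDerivAt hFTC hintg
  have e1 : a + ((1:ℝ):ℂ)*(b-a) = b := by push_cast; ring
  have e0 : a + ((0:ℝ):ℂ)*(b-a) = a := by push_cast; ring
  rw [e1, e0, hab, sub_self, intervalIntegral.integral_const_mul] at heq
  have hI0 : (∫ t in (0:ℝ)..1, gg (a + (t:ℂ)*(b-a))) = 0 := by
    rcases mul_eq_zero.1 heq with h | h
    · exact absurd h hba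
    · exact h
  have hgint : IntervalIntegrable (fun t : ℝ => gg (a + (t:ℂ)*(b-a)))
      MeasureTheory.volume 0 1 := by
    apply ContinuousOn.intervalIntegrable
    rw [Set.uIcc_of_le zero_le_one]
    exact hcontseg
  have hre := Complex.reCLM.intervalIntegral_comp_comm hgint
  have hpos : 0 < ∫ t in (0:ℝ)..1, (gg (a + (t:ℂ)*(b-a))).re := by
    apply intervalIntegral.intervalIntegral_pos_of_pos_on
    · apply ContinuousOn.intervalIntegrable
      rw [Set.uIcc_of_le zero_le_one]
      exact Complex.continuous_re.comp_continuousOn hcontseg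
    · intro t ht
      exact gg_re_pos (hseg t ⟨le_of_lt ht.1, le_of_lt ht.2⟩)
    · norm_num
  have : (∫ t in (0:ℝ)..1, (gg (a + (t:ℂ)*(b-a))).re) = 0 := by
    have : (∫ t in (0:ℝ)..1, Complex.reCLM (gg (a + (t:ℂ)*(b-a)))) =
        Complex.reCLM (∫ t in (0:ℝ)..1, gg (a + (t:ℂ)*(b-a))) := hre
    rw [hI0] at this
    simpa using this
  linarith

lemma deriv_DD_zero : deriv DD 0 = 0 := by
  have h := ((hasDerivAt_pow 2 (0:ℂ)).mul
    ((analyticAt_AA h0mem).differentiableAt.hasDerivAt)).deriv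
  have hDD : DD = fun z : ℂ => z^2 * AA z := rfl
  rw [hDD, show (fun z : ℂ => z^2 * AA z) = (fun x : ℂ => x^2) * AA from rfl, h]
  simp

lemma E2 : deriv gg =ᶠ[nhds (0:ℂ)] DD := by
  filter_upwards [ball_mem_nhds (0:ℂ) one_pos] with z hz
  exact (gg_hasDerivAt hz).deriv

lemma E3 : deriv DD =ᶠ[nhds (0:ℂ)] fun z => 2*z*AA z + z^2 * deriv AA z := by
  filter_upwards [ball_mem_nhds (0:ℂ) one_pos] with z hz
  have h := ((hasDerivAt_pow 2 z).mul
    ((analyticAt_AA hz).differentiableAt.hasDerivAt)).deriv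
  have hDD : DD = fun z : ℂ => z^2 * AA z := rfl
  rw [hDD, show (fun z : ℂ => z^2 * AA z) = (fun x : ℂ => x^2) * AA from rfl, h]
  push_cast
  ring

lemma diffAt_derivAA : DifferentiableAt ℂ (deriv AA) 0 := by
  obtain ⟨s, hs, hA⟩ := (analyticAt_AA h0mem).exists_mem_nhds_analyticOnNhd
  exact (hA.deriv 0 (mem_of_mem_nhds hs)).differentiableAt

lemma deriv_deriv_DD_zero : deriv (deriv DD) 0 = 3 := by
  rw [E3.deriv_eq]
  have h1 : HasDerivAt (fun z : ℂ => 2*z*AA z) (2*1*AA 0 + 2*0*deriv AA 0) 0 := by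
    have := (((hasDerivAt_id (0:ℂ)).const_mul (2:ℂ)).mul
      ((analyticAt_AA h0mem).differentiableAt.hasDerivAt))
    simpa [Pi.mul_def] using this
  have h2 : HasDerivAt (fun z : ℂ => z^2 * deriv AA z)
      ((2:ℕ)*(0:ℂ)^1*deriv AA 0 + (0:ℂ)^2 * deriv (deriv AA) 0) 0 :=
    (hasDerivAt_pow 2 (0:ℂ)).mul (diffAt_derivAA.hasDerivAt)
  have h := (h1.add h2).deriv
  rw [show (fun z : ℂ => 2*z*AA z + z^2 * deriv AA z) =
    (fun z : ℂ => 2*z*AA z) + (fun z : ℂ => z^2 * deriv AA z) from rfl, h, AA_zero]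
  norm_num

theorem BTB_zalcman_sharp :
    IsBTB f₃ ∧ tCoeff f₃ 2 = 0 ∧ tCoeff f₃ 3 = 0 ∧ tCoeff f₃ 4 = 1/8 ∧
      ‖tCoeff f₃ 2 * tCoeff f₃ 3 - tCoeff f₃ 4‖ = 1/8 := by
  have E1 : deriv f₃ =ᶠ[nhds (0:ℂ)] gg := by
    filter_upwards [ball_mem_nhds (0:ℂ) one_pos] with z hz
    exact f3_deriv hz
  -- iterated derivative computations
  have c2 : iteratedDeriv 2 f₃ 0 = 0 := by
    rw [iteratedDeriv_succ', Filter.EventuallyEq.iteratedDeriv_eq 1 E1, iteratedDeriv_one,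
      (gg_hasDerivAt h0mem).deriv]
    simp [DD]
  have c3 : iteratedDeriv 3 f₃ 0 = 0 := by
    rw [iteratedDeriv_succ', Filter.EventuallyEq.iteratedDeriv_eq 2 E1, iteratedDeriv_succ',
      Filter.EventuallyEq.iteratedDeriv_eq 1 E2, iteratedDeriv_one, deriv_DD_zero]
  have c4 : iteratedDeriv 4 f₃ 0 = 3 := by
    rw [iteratedDeriv_succ', Filter.EventuallyEq.iteratedDeriv_eq 3 E1, iteratedDeriv_succ',
      Filter.EventuallyEq.iteratedDeriv_eq 2 E2, iteratedDeriv_succ',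
      iteratedDeriv_one, deriv_deriv_DD_zero]
  have t2 : tCoeff f₃ 2 = 0 := by rw [tCoeff, c2]; simp
  have t3 : tCoeff f₃ 3 = 0 := by rw [tCoeff, c3]; simp
  have t4 : tCoeff f₃ 4 = 1/8 := by
    rw [tCoeff, c4]
    norm_num [Nat.factorial]
  refine ⟨⟨?_, f3_zero, ?_, f3_injOn, fun z => z^3, ?_, by simp, ?_, ?_⟩, t2, t3, t4, ?_⟩
  · exact DifferentiableOn.analyticOnNhd
      (fun z hz => (f3_hasDerivAt hz).differentiableAt.differentiableWithinAt) isOpen_ball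
  · rw [f3_deriv h0mem, gg_zero]
  · exact fun z _ => analyticAt_cube
  · exact fun z hz => cube_abs_lt hz
  · intro z hz
    rw [f3_deriv hz]
    rfl
  · rw [t2, t3, t4]
    norm_num
end

section
/- Let f be analytic on the unit disk 𝔻 with f(0) = 0 and f'(0) = 1, with Taylor coefficients a_n = f^{(n)}(0)/n!. Suppose ω : 𝔻 → ℂ is analytic with ω(0) = 0 and |ω(z)| < 1 on 𝔻 and f'(z) = (1 + tanh(ω(z)))^{1/2} on 𝔻 (principal square root), and let p = (1 + ω)/(1 − ω) with Taylor expansion p(z) = 1 + c_1 z + c_2 z² + c_3 z³ + ⋯ at 0. Then a_2 = c_1/8, a_3 = c_2/12 − 5c_1²/96, and a_4 = c_3/16 − 5c_1c_2/64 + 31c_1³/1536. -/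
open Complex Metric

lemma aux_cosh_ne_zero {u : ℂ} (hu : ‖u‖ < 1) : Complex.cosh u ≠ 0 := by
  intro h
  have h1 : Complex.exp u + Complex.exp (-u) = 0 := by
    rw [Complex.cosh] at h
    field_simp at h
    linear_combination h
  have h3 : Complex.exp u * Complex.exp (-u) = 1 := by
    rw [← Complex.exp_add, add_neg_cancel, Complex.exp_zero]
  have h2 : Complex.exp (u + u) = Complex.exp (Real.pi * Complex.I) := by
    rw [Complex.exp_add, Complex.exp_pi_mul_I]
    linear_combination Complex.exp u * h1 - h3
  rw [Complex.exp_eq_exp_iff_exists_int] at h2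
  obtain ⟨n, hn⟩ := h2
  have habs : ‖u + u‖ < 2 := by
    calc ‖u + u‖ ≤ ‖u‖ + ‖u‖ := norm_add_le u u
    _ < 2 := by linarith
  rw [hn] at habs
  have hre : (↑Real.pi * Complex.I + ↑n * (2 * ↑Real.pi * Complex.I))
      = (((2 * (n:ℝ) + 1) * Real.pi : ℝ) : ℂ) * Complex.I := by push_cast; ring
  rw [hre, norm_mul, Complex.norm_I, Complex.norm_real, Real.norm_eq_abs, mul_one, abs_mul,
    abs_of_pos Real.pi_pos] at habs
  have h4 : (1:ℝ) ≤ |2 * (n:ℝ) + 1| := by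
    have h5 : (2 * n + 1 : ℤ) ≠ 0 := by omega
    have h6 := Int.one_le_abs h5
    have : ((1:ℤ):ℝ) ≤ ((|2 * n + 1| : ℤ) : ℝ) := by exact_mod_cast h6
    rw [Int.cast_abs] at this
    push_cast at this ⊢
    exact this
  nlinarith [Real.pi_gt_three]

lemma deriv_congr_ball {F R : ℂ → ℂ} {z : ℂ} (hz : z ∈ ball (0:ℂ) 1)
    (h : ∀ y ∈ ball (0:ℂ) 1, F y = R y) : deriv F z = deriv R z :=
  Filter.EventuallyEq.deriv_eq <| by
    filter_upwards [Metric.isOpen_ball.mem_nhds hz] with y hy using h y hy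

theorem BTB_coeff_formulas (f ω : ℂ → ℂ)
    (hf : AnalyticOnNhd ℂ f (ball 0 1)) (hf0 : f 0 = 0) (hf1 : deriv f 0 = 1)
    (hω : AnalyticOnNhd ℂ ω (ball 0 1)) (hω0 : ω 0 = 0)
    (hωb : ∀ z ∈ ball (0:ℂ) 1, ‖ω z‖ < 1)
    (hsub : ∀ z ∈ ball (0:ℂ) 1, deriv f z = psqrt (1 + Complex.tanh (ω z)))
    (p : ℂ → ℂ) (hp : p = fun z => (1 + ω z) / (1 - ω z)) :
    tCoeff f 2 = tCoeff p 1 / 8 ∧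
    tCoeff f 3 = tCoeff p 2 / 12 - 5 * (tCoeff p 1)^2 / 96 ∧
    tCoeff f 4 = tCoeff p 3 / 16 - 5 * tCoeff p 1 * tCoeff p 2 / 64
      + 31 * (tCoeff p 1)^3 / 1536 := by
  have h0B : (0:ℂ) ∈ ball (0:ℂ) 1 := mem_ball_self one_pos
  have hCne : ∀ z ∈ ball (0:ℂ) 1, Complex.cosh (ω z) ≠ 0 :=
    fun z hz => aux_cosh_ne_zero (hωb z hz)
  have hωne : ∀ z ∈ ball (0:ℂ) 1, (1:ℂ) - ω z ≠ 0 := by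
    intro z hz h
    have hb := hωb z hz
    rw [show ω z = 1 by linear_combination -h] at hb
    simp at hb
  -- basic identity : (f')² cosh ω = exp ω on the ball
  have I0 : ∀ z ∈ ball (0:ℂ) 1,
      (deriv f z) ^ 2 * Complex.cosh (ω z) = Complex.exp (ω z) := by
    intro z hz
    have h1 : 1 + Complex.tanh (ω z) = Complex.exp (ω z) / Complex.cosh (ω z) := by
      rw [Complex.tanh, ← Complex.cosh_add_sinh]
      field_simp [hCne z hz]
    have hne : 1 + Complex.tanh (ω z) ≠ 0 := by
      rw [h1]
      exact div_ne_zero (Complex.exp_ne_zero _) (hCne z hz)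
    have hsq : (psqrt (1 + Complex.tanh (ω z))) ^ 2 = 1 + Complex.tanh (ω z) := by
      have : (psqrt (1 + Complex.tanh (ω z))) ^ 2
          = Complex.exp ((1/2 : ℂ) * Complex.log (1 + Complex.tanh (ω z))
            + (1/2 : ℂ) * Complex.log (1 + Complex.tanh (ω z))) := by
        rw [Complex.exp_add, psqrt]; ring
      rw [this, show (1/2 : ℂ) * Complex.log (1 + Complex.tanh (ω z))
            + (1/2 : ℂ) * Complex.log (1 + Complex.tanh (ω z))
          = Complex.log (1 + Complex.tanh (ω z)) by ring,
        Complex.exp_log hne]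
    rw [hsub z hz, hsq, h1]
    field_simp [hCne z hz]
  -- first derivative identity
  have I1 : ∀ z ∈ ball (0:ℂ) 1,
      2 * deriv f z * deriv (deriv f) z * Complex.cosh (ω z)
        + deriv f z ^ 2 * (Complex.sinh (ω z) * deriv ω z)
      = Complex.exp (ω z) * deriv ω z := by
    intro z hz
    have hGd : HasDerivAt (deriv f) (deriv (deriv f) z) z :=
      (hf.deriv z hz).differentiableAt.hasDerivAt
    have hWd : HasDerivAt ω (deriv ω z) z := (hω z hz).differentiableAt.hasDerivAt
    have hd := deriv_congr_ball (F := fun y => (deriv f y) ^ 2 * Complex.cosh (ω y))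
      (R := fun y => Complex.exp (ω y)) hz I0
    have hL : HasDerivAt (fun y => (deriv f y) ^ 2 * Complex.cosh (ω y))
        (2 * deriv f z * deriv (deriv f) z * Complex.cosh (ω z)
          + deriv f z ^ 2 * (Complex.sinh (ω z) * deriv ω z)) z := by
      have h := (hGd.pow 2).mul hWd.ccosh
      refine h.congr_deriv ?_
      simp only [Pi.pow_apply]; ring
    have hR : HasDerivAt (fun y => Complex.exp (ω y))
        (Complex.exp (ω z) * deriv ω z) z := hWd.cexp
    rw [← hL.deriv, hd, hR.deriv]
  -- second derivative identity
  have I2 : ∀ z ∈ ball (0:ℂ) 1,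
      2 * deriv (deriv f) z ^ 2 * Complex.cosh (ω z)
        + 2 * deriv f z * deriv (deriv (deriv f)) z * Complex.cosh (ω z)
        + 4 * deriv f z * deriv (deriv f) z * Complex.sinh (ω z) * deriv ω z
        + deriv f z ^ 2 * Complex.cosh (ω z) * deriv ω z ^ 2
        + deriv f z ^ 2 * Complex.sinh (ω z) * deriv (deriv ω) z
      = Complex.exp (ω z) * deriv ω z ^ 2 + Complex.exp (ω z) * deriv (deriv ω) z := by
    intro z hz
    have hGd : HasDerivAt (deriv f) (deriv (deriv f) z) z :=
      (hf.deriv z hz).differentiableAt.hasDerivAt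
    have hG1d : HasDerivAt (deriv (deriv f)) (deriv (deriv (deriv f)) z) z :=
      (hf.deriv.deriv z hz).differentiableAt.hasDerivAt
    have hWd : HasDerivAt ω (deriv ω z) z := (hω z hz).differentiableAt.hasDerivAt
    have hW1d : HasDerivAt (deriv ω) (deriv (deriv ω) z) z :=
      (hω.deriv z hz).differentiableAt.hasDerivAt
    have hd := deriv_congr_ball
      (F := fun y => 2 * deriv f y * deriv (deriv f) y * Complex.cosh (ω y)
        + deriv f y ^ 2 * (Complex.sinh (ω y) * deriv ω y))
      (R := fun y => Complex.exp (ω y) * deriv ω y) hz I1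
    have hL : HasDerivAt (fun y => 2 * deriv f y * deriv (deriv f) y * Complex.cosh (ω y)
        + deriv f y ^ 2 * (Complex.sinh (ω y) * deriv ω y))
        (2 * deriv (deriv f) z ^ 2 * Complex.cosh (ω z)
          + 2 * deriv f z * deriv (deriv (deriv f)) z * Complex.cosh (ω z)
          + 4 * deriv f z * deriv (deriv f) z * Complex.sinh (ω z) * deriv ω z
          + deriv f z ^ 2 * Complex.cosh (ω z) * deriv ω z ^ 2
          + deriv f z ^ 2 * Complex.sinh (ω z) * deriv (deriv ω) z) z := by
      have h := (((hGd.const_mul (2:ℂ)).mul hG1d).mul hWd.ccosh).add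
        ((hGd.pow 2).mul (hWd.csinh.mul hW1d))
      refine h.congr_deriv ?_
      simp only [Pi.pow_apply, Pi.mul_apply, Pi.sub_apply, Pi.add_apply]; ring
    have hR : HasDerivAt (fun y => Complex.exp (ω y) * deriv ω y)
        (Complex.exp (ω z) * deriv ω z ^ 2 + Complex.exp (ω z) * deriv (deriv ω) z) z := by
      have h := hWd.cexp.mul hW1d
      refine h.congr_deriv ?_
      ring
    rw [← hL.deriv, hd, hR.deriv]
  -- third derivative identity at 0
  have I3 :
      6 * deriv (deriv f) 0 * deriv (deriv (deriv f)) 0 * Complex.cosh (ω 0)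
        + 2 * deriv f 0 * deriv (deriv (deriv (deriv f))) 0 * Complex.cosh (ω 0)
        + 6 * deriv (deriv f) 0 ^ 2 * Complex.sinh (ω 0) * deriv ω 0
        + 6 * deriv f 0 * deriv (deriv (deriv f)) 0 * Complex.sinh (ω 0) * deriv ω 0
        + 6 * deriv f 0 * deriv (deriv f) 0 * Complex.cosh (ω 0) * deriv ω 0 ^ 2
        + 6 * deriv f 0 * deriv (deriv f) 0 * Complex.sinh (ω 0) * deriv (deriv ω) 0
        + deriv f 0 ^ 2 * Complex.sinh (ω 0) * deriv ω 0 ^ 3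
        + 3 * deriv f 0 ^ 2 * Complex.cosh (ω 0) * deriv ω 0 * deriv (deriv ω) 0
        + deriv f 0 ^ 2 * Complex.sinh (ω 0) * deriv (deriv (deriv ω)) 0
      = Complex.exp (ω 0) * deriv ω 0 ^ 3
        + 3 * Complex.exp (ω 0) * deriv ω 0 * deriv (deriv ω) 0
        + Complex.exp (ω 0) * deriv (deriv (deriv ω)) 0 := by
    have hGd : HasDerivAt (deriv f) (deriv (deriv f) 0) 0 :=
      (hf.deriv 0 h0B).differentiableAt.hasDerivAt
    have hG1d : HasDerivAt (deriv (deriv f)) (deriv (deriv (deriv f)) 0) 0 :=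
      (hf.deriv.deriv 0 h0B).differentiableAt.hasDerivAt
    have hG2d : HasDerivAt (deriv (deriv (deriv f))) (deriv (deriv (deriv (deriv f))) 0) 0 :=
      (hf.deriv.deriv.deriv 0 h0B).differentiableAt.hasDerivAt
    have hWd : HasDerivAt ω (deriv ω 0) 0 := (hω 0 h0B).differentiableAt.hasDerivAt
    have hW1d : HasDerivAt (deriv ω) (deriv (deriv ω) 0) 0 :=
      (hω.deriv 0 h0B).differentiableAt.hasDerivAt
    have hW2d : HasDerivAt (deriv (deriv ω)) (deriv (deriv (deriv ω)) 0) 0 :=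
      (hω.deriv.deriv 0 h0B).differentiableAt.hasDerivAt
    have hd := deriv_congr_ball
      (F := fun y => 2 * deriv (deriv f) y ^ 2 * Complex.cosh (ω y)
        + 2 * deriv f y * deriv (deriv (deriv f)) y * Complex.cosh (ω y)
        + 4 * deriv f y * deriv (deriv f) y * Complex.sinh (ω y) * deriv ω y
        + deriv f y ^ 2 * Complex.cosh (ω y) * deriv ω y ^ 2
        + deriv f y ^ 2 * Complex.sinh (ω y) * deriv (deriv ω) y)
      (R := fun y => Complex.exp (ω y) * deriv ω y ^ 2
        + Complex.exp (ω y) * deriv (deriv ω) y) h0B I2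
    have hL : HasDerivAt (fun y => 2 * deriv (deriv f) y ^ 2 * Complex.cosh (ω y)
        + 2 * deriv f y * deriv (deriv (deriv f)) y * Complex.cosh (ω y)
        + 4 * deriv f y * deriv (deriv f) y * Complex.sinh (ω y) * deriv ω y
        + deriv f y ^ 2 * Complex.cosh (ω y) * deriv ω y ^ 2
        + deriv f y ^ 2 * Complex.sinh (ω y) * deriv (deriv ω) y)
        (6 * deriv (deriv f) 0 * deriv (deriv (deriv f)) 0 * Complex.cosh (ω 0)
          + 2 * deriv f 0 * deriv (deriv (deriv (deriv f))) 0 * Complex.cosh (ω 0)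
          + 6 * deriv (deriv f) 0 ^ 2 * Complex.sinh (ω 0) * deriv ω 0
          + 6 * deriv f 0 * deriv (deriv (deriv f)) 0 * Complex.sinh (ω 0) * deriv ω 0
          + 6 * deriv f 0 * deriv (deriv f) 0 * Complex.cosh (ω 0) * deriv ω 0 ^ 2
          + 6 * deriv f 0 * deriv (deriv f) 0 * Complex.sinh (ω 0) * deriv (deriv ω) 0
          + deriv f 0 ^ 2 * Complex.sinh (ω 0) * deriv ω 0 ^ 3
          + 3 * deriv f 0 ^ 2 * Complex.cosh (ω 0) * deriv ω 0 * deriv (deriv ω) 0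
          + deriv f 0 ^ 2 * Complex.sinh (ω 0) * deriv (deriv (deriv ω)) 0) 0 := by
      have h := ((((((hG1d.pow 2).const_mul (2:ℂ)).mul hWd.ccosh).add
        (((hGd.const_mul (2:ℂ)).mul hG2d).mul hWd.ccosh)).add
        ((((hGd.const_mul (4:ℂ)).mul hG1d).mul hWd.csinh).mul hW1d)).add
        (((hGd.pow 2).mul hWd.ccosh).mul (hW1d.pow 2))).add
        (((hGd.pow 2).mul hWd.csinh).mul hW2d)
      refine h.congr_deriv ?_
      simp only [Pi.pow_apply, Pi.mul_apply, Pi.sub_apply, Pi.add_apply]; ring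
    have hR : HasDerivAt (fun y => Complex.exp (ω y) * deriv ω y ^ 2
        + Complex.exp (ω y) * deriv (deriv ω) y)
        (Complex.exp (ω 0) * deriv ω 0 ^ 3
          + 3 * Complex.exp (ω 0) * deriv ω 0 * deriv (deriv ω) 0
          + Complex.exp (ω 0) * deriv (deriv (deriv ω)) 0) 0 := by
      have h := (hWd.cexp.mul (hW1d.pow 2)).add (hWd.cexp.mul hW2d)
      refine h.congr_deriv ?_
      simp only [Pi.pow_apply]; ring
    rw [← hL.deriv, hd, hR.deriv]
  -- p identities
  have hpA : AnalyticOnNhd ℂ p (ball 0 1) := by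
    rw [hp]
    exact AnalyticOnNhd.div (analyticOnNhd_const.add hω) (analyticOnNhd_const.sub hω) hωne
  have hp0 : p 0 = 1 := by rw [hp]; simp [hω0]
  have J0 : ∀ z ∈ ball (0:ℂ) 1, p z * (1 - ω z) = 1 + ω z := by
    intro z hz
    rw [hp]
    field_simp [hωne z hz]
  have J1 : ∀ z ∈ ball (0:ℂ) 1,
      deriv p z * (1 - ω z) - p z * deriv ω z = deriv ω z := by
    intro z hz
    have hPd : HasDerivAt p (deriv p z) z := (hpA z hz).differentiableAt.hasDerivAt
    have hWd : HasDerivAt ω (deriv ω z) z := (hω z hz).differentiableAt.hasDerivAt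
    have hd := deriv_congr_ball (F := fun y => p y * (1 - ω y))
      (R := fun y => 1 + ω y) hz J0
    have hL : HasDerivAt (fun y => p y * (1 - ω y))
        (deriv p z * (1 - ω z) - p z * deriv ω z) z := by
      have h := hPd.mul ((hasDerivAt_const z (1:ℂ)).sub hWd)
      refine h.congr_deriv ?_
      simp only [Pi.pow_apply, Pi.mul_apply, Pi.sub_apply, Pi.add_apply]; ring
    have hR : HasDerivAt (fun y => 1 + ω y) (deriv ω z) z := by
      have h := (hasDerivAt_const z (1:ℂ)).add hWd
      refine h.congr_deriv ?_
      ring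
    rw [← hL.deriv, hd, hR.deriv]
  have J2 : ∀ z ∈ ball (0:ℂ) 1,
      deriv (deriv p) z * (1 - ω z) - 2 * deriv p z * deriv ω z - p z * deriv (deriv ω) z
      = deriv (deriv ω) z := by
    intro z hz
    have hPd : HasDerivAt p (deriv p z) z := (hpA z hz).differentiableAt.hasDerivAt
    have hP1d : HasDerivAt (deriv p) (deriv (deriv p) z) z :=
      (hpA.deriv z hz).differentiableAt.hasDerivAt
    have hWd : HasDerivAt ω (deriv ω z) z := (hω z hz).differentiableAt.hasDerivAt
    have hW1d : HasDerivAt (deriv ω) (deriv (deriv ω) z) z :=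
      (hω.deriv z hz).differentiableAt.hasDerivAt
    have hd := deriv_congr_ball
      (F := fun y => deriv p y * (1 - ω y) - p y * deriv ω y)
      (R := fun y => deriv ω y) hz J1
    have hL : HasDerivAt (fun y => deriv p y * (1 - ω y) - p y * deriv ω y)
        (deriv (deriv p) z * (1 - ω z) - 2 * deriv p z * deriv ω z
          - p z * deriv (deriv ω) z) z := by
      have h := (hP1d.mul ((hasDerivAt_const z (1:ℂ)).sub hWd)).sub (hPd.mul hW1d)
      refine h.congr_deriv ?_
      simp only [Pi.pow_apply, Pi.mul_apply, Pi.sub_apply, Pi.add_apply]; ring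
    have hR : HasDerivAt (fun y => deriv ω y) (deriv (deriv ω) z) z := hW1d
    rw [← hL.deriv, hd, hR.deriv]
  have J3 :
      deriv (deriv (deriv p)) 0 * (1 - ω 0) - 3 * deriv (deriv p) 0 * deriv ω 0
        - 3 * deriv p 0 * deriv (deriv ω) 0 - p 0 * deriv (deriv (deriv ω)) 0
      = deriv (deriv (deriv ω)) 0 := by
    have hPd : HasDerivAt p (deriv p 0) 0 := (hpA 0 h0B).differentiableAt.hasDerivAt
    have hP1d : HasDerivAt (deriv p) (deriv (deriv p) 0) 0 :=
      (hpA.deriv 0 h0B).differentiableAt.hasDerivAt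
    have hP2d : HasDerivAt (deriv (deriv p)) (deriv (deriv (deriv p)) 0) 0 :=
      (hpA.deriv.deriv 0 h0B).differentiableAt.hasDerivAt
    have hWd : HasDerivAt ω (deriv ω 0) 0 := (hω 0 h0B).differentiableAt.hasDerivAt
    have hW1d : HasDerivAt (deriv ω) (deriv (deriv ω) 0) 0 :=
      (hω.deriv 0 h0B).differentiableAt.hasDerivAt
    have hW2d : HasDerivAt (deriv (deriv ω)) (deriv (deriv (deriv ω)) 0) 0 :=
      (hω.deriv.deriv 0 h0B).differentiableAt.hasDerivAt
    have hd := deriv_congr_ball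
      (F := fun y => deriv (deriv p) y * (1 - ω y) - 2 * deriv p y * deriv ω y
        - p y * deriv (deriv ω) y)
      (R := fun y => deriv (deriv ω) y) h0B J2
    have hL : HasDerivAt (fun y => deriv (deriv p) y * (1 - ω y)
        - 2 * deriv p y * deriv ω y - p y * deriv (deriv ω) y)
        (deriv (deriv (deriv p)) 0 * (1 - ω 0) - 3 * deriv (deriv p) 0 * deriv ω 0
          - 3 * deriv p 0 * deriv (deriv ω) 0 - p 0 * deriv (deriv (deriv ω)) 0) 0 := by
      have h := ((hP2d.mul ((hasDerivAt_const (0:ℂ) (1:ℂ)).sub hWd)).sub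
        ((hP1d.const_mul (2:ℂ)).mul hW1d)).sub (hPd.mul hW2d)
      refine h.congr_deriv ?_
      simp only [Pi.pow_apply, Pi.mul_apply, Pi.sub_apply, Pi.add_apply]; ring
    have hR : HasDerivAt (fun y => deriv (deriv ω) y) (deriv (deriv (deriv ω)) 0) 0 := hW2d
    rw [← hL.deriv, hd, hR.deriv]
  -- evaluate everything at 0
  have e1 := I1 0 h0B
  have e2 := I2 0 h0B
  have e3 := I3
  have eJ1 := J1 0 h0B
  have eJ2 := J2 0 h0B
  have eJ3 := J3
  rw [hω0, hf1] at e1 e2 e3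
  rw [hω0] at eJ1 eJ2 eJ3
  rw [hp0] at eJ1 eJ2 eJ3
  simp only [Complex.cosh_zero, Complex.sinh_zero, Complex.exp_zero, one_mul, mul_one,
    mul_zero, zero_mul, add_zero, zero_add, sub_zero, one_pow, mul_comm] at e1 e2 e3 eJ1 eJ2 eJ3
  -- solve for the derivatives
  have hg1 : deriv (deriv f) 0 = deriv ω 0 / 2 := by linear_combination e1 / 2
  have hg2 : deriv (deriv (deriv f)) 0 = deriv (deriv ω) 0 / 2 - deriv ω 0 ^ 2 / 4 := by
    linear_combination e2 / 2 - (deriv (deriv f) 0 + deriv ω 0 / 2) * hg1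
  have hg3 : deriv (deriv (deriv (deriv f))) 0
      = deriv (deriv (deriv ω)) 0 / 2 - 3 / 4 * deriv ω 0 * deriv (deriv ω) 0
        - 5 / 8 * deriv ω 0 ^ 3 := by
    linear_combination e3 / 2 - 3 * deriv (deriv f) 0 * hg2
      - (3 / 2 * deriv (deriv ω) 0 + 9 / 4 * deriv ω 0 ^ 2) * hg1
  have hp1 : deriv p 0 = 2 * deriv ω 0 := by linear_combination eJ1
  have hp2 : deriv (deriv p) 0 = 2 * deriv (deriv ω) 0 + 4 * deriv ω 0 ^ 2 := by
    linear_combination eJ2 + 2 * deriv ω 0 * hp1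
  have hp3 : deriv (deriv (deriv p)) 0
      = 2 * deriv (deriv (deriv ω)) 0 + 12 * deriv ω 0 * deriv (deriv ω) 0
        + 12 * deriv ω 0 ^ 3 := by
    linear_combination eJ3 + 3 * deriv ω 0 * hp2 + 3 * deriv (deriv ω) 0 * hp1
  -- unfold tCoeff
  have ht1 : tCoeff p 1 = deriv p 0 := by
    simp [tCoeff, iteratedDeriv_one]
  have it2 : ∀ g : ℂ → ℂ, iteratedDeriv 2 g = deriv (deriv g) := by
    intro g
    rw [show (2:ℕ) = 1 + 1 from rfl, iteratedDeriv_succ, iteratedDeriv_one]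
  have it3 : ∀ g : ℂ → ℂ, iteratedDeriv 3 g = deriv (deriv (deriv g)) := by
    intro g
    rw [show (3:ℕ) = 2 + 1 from rfl, iteratedDeriv_succ, it2]
  have it4 : ∀ g : ℂ → ℂ, iteratedDeriv 4 g = deriv (deriv (deriv (deriv g))) := by
    intro g
    rw [show (4:ℕ) = 3 + 1 from rfl, iteratedDeriv_succ, it3]
  have ht2 : ∀ g : ℂ → ℂ, tCoeff g 2 = deriv (deriv g) 0 / 2 := by
    intro g; rw [tCoeff, it2]; norm_num
  have ht3 : ∀ g : ℂ → ℂ, tCoeff g 3 = deriv (deriv (deriv g)) 0 / 6 := by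
    intro g; rw [tCoeff, it3]; norm_num [Nat.factorial]
  have ht4 : tCoeff f 4 = deriv (deriv (deriv (deriv f))) 0 / 24 := by
    rw [tCoeff, it4]; norm_num [Nat.factorial]
  refine ⟨?_, ?_, ?_⟩
  · rw [ht2, ht1, hg1, hp1]; ring
  · rw [ht3, ht2, ht1, hg2, hp2, hp1]; ring
  · rw [ht4, ht3, ht2, ht1, hg3, hp3, hp2, hp1]; ring
end
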